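/- For every odd prime p and every e ≥ 1, ∑_{k=1}^{p-1} C(p^e - 1, k)^{-1} ≡ p^{e-1}·(1 - 2^{p-1}) (mod p^{e+1}), as a congruence of p-integral rationals. -/

import Mathlib

open Finset

namespace S12

variable {p : ℕ} [hp : Fact p.Prime]

def harm (k : ℕ) : ℚ := ∑ j ∈ Icc 1 k, (j : ℚ)⁻¹

lemma pnorm_inv (x : ℚ) : padicNorm p x⁻¹ = (padicNorm p x)⁻¹ := by
  rw [← one_div, padicNorm.div, padicNorm.one, one_div]

lemma pnorm_pow (x : ℚ) (n : ℕ) : padicNorm p (x ^ n) = padicNorm p x ^ n := by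
  induction n with
  | zero => simp [padicNorm.one]
  | succ n ih => rw [pow_succ, pow_succ, padicNorm.mul, ih]

lemma norm_unit {j : ℕ} (h1 : 0 < j) (h2 : j < p) : padicNorm p (j : ℚ) = 1 := by
  rw [padicNorm.nat_eq_one_iff]
  exact Nat.not_dvd_of_pos_of_lt h1 h2

lemma norm_p_pow (e : ℕ) : padicNorm p ((p:ℚ) ^ e) = ((p:ℚ)⁻¹) ^ e := by
  rw [pnorm_pow, padicNorm.padicNorm_p_of_prime]

lemma norm_sub_unit {e j : ℕ} (he : 1 ≤ e) (h1 : 0 < j) (h2 : j < p) :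
    padicNorm p ((p:ℚ) ^ e - j) = 1 := by
  have h : ((p:ℚ) ^ e - j) = (((p:ℤ) ^ e - j : ℤ) : ℚ) := by push_cast; ring
  rw [h, padicNorm.int_eq_one_iff]
  intro hd
  have hj : (p:ℤ) ∣ (j:ℤ) := by
    have hpe : (p:ℤ) ∣ (p:ℤ) ^ e := dvd_pow_self _ (by omega)
    simpa using dvd_sub hpe hd
  exact Nat.not_dvd_of_pos_of_lt h1 h2 (Int.ofNat_dvd.mp hj)

lemma norm_harm_le {k : ℕ} (hk : k < p) : padicNorm p (harm k) ≤ 1 := by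
  refine padicNorm.sum_le' (fun j hj => ?_) zero_le_one
  simp only [mem_Icc] at hj
  rw [pnorm_inv, norm_unit (by omega) (by omega)]
  norm_num

lemma lemA {e : ℕ} (he : 1 ≤ e) (k : ℕ) (hk : k ≤ p - 1) :
    padicNorm p (((p ^ e - 1).choose k : ℚ)⁻¹ - (-1) ^ k * (1 + (p:ℚ) ^ e * harm k))
      ≤ ((p:ℚ)⁻¹) ^ (2 * e) := by
  have hp1 : 1 < p := hp.out.one_lt
  have hpe : p ≤ p ^ e := Nat.le_self_pow (by omega) p
  have hppos : (0:ℚ) < p := by exact_mod_cast (by omega : 0 < p)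
  induction k with
  | zero =>
      simp [harm, padicNorm.zero]
  | succ k IH =>
      have H := IH (by omega)
      set n := p ^ e - 1 with hn
      set q : ℚ := (p:ℚ) ^ e with hq
      set m : ℚ := (k:ℚ) + 1 with hmdef
      have hkp : k + 1 < p := by omega
      have hkn : k < n := by omega
      have hncast : ((n : ℕ) : ℚ) = q - 1 := by
        have h1 : 1 ≤ p ^ e := by omega
        rw [hn]; push_cast [h1]; ring
      have hmcast : ((k + 1 : ℕ) : ℚ) = m := by push_cast; ring
      have hrec : (n.choose (k+1) : ℚ) * m = (n.choose k : ℚ) * (q - m) := by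
        have := Nat.choose_succ_right_eq n k
        have hc : ((n.choose (k+1) * (k+1) : ℕ) : ℚ) = ((n.choose k * (n - k) : ℕ) : ℚ) := by
          exact_mod_cast congrArg (Nat.cast (R := ℚ)) this
        push_cast [Nat.cast_sub hkn.le] at hc
        rw [hncast] at hc
        rw [hc]; ring
      have hm0 : m ≠ 0 := by positivity
      have hmnorm : padicNorm p m = 1 := by
        rw [← hmcast]; exact norm_unit (by omega) hkp
      have hqmnorm : padicNorm p (q - m) = 1 := by
        rw [← hmcast]; exact norm_sub_unit he (by omega) hkp
      have hqm0 : q - m ≠ 0 := by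
        intro h; rw [h, padicNorm.zero] at hqmnorm; norm_num at hqmnorm
      have hc0 : (n.choose k : ℚ) ≠ 0 := by
        exact_mod_cast (Nat.choose_pos hkn.le).ne'
      have hc0' : (n.choose (k+1) : ℚ) ≠ 0 := by
        exact_mod_cast (Nat.choose_pos hkn).ne'
      have ha : ((n.choose (k+1) : ℕ) : ℚ)⁻¹ = (n.choose k : ℚ)⁻¹ * (m * (q - m)⁻¹) := by
        field_simp
        linear_combination -hrec
      have hharm : harm (k+1) = harm k + m⁻¹ := by
        rw [harm, harm, Finset.sum_Icc_succ_top (by omega : 1 ≤ k + 1), hmcast]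
      have hdec : (n.choose (k+1) : ℚ)⁻¹ - (-1) ^ (k+1) * (1 + q * harm (k+1))
          = (m * (q - m)⁻¹) * ((n.choose k : ℚ)⁻¹ - (-1) ^ k * (1 + q * harm k))
            + (-1) ^ k * (q * q) * ((q - m)⁻¹ * m⁻¹ + harm k * (q - m)⁻¹) := by
        rw [ha, hharm, pow_succ]
        field_simp
        ring
      rw [hdec]
      refine le_trans padicNorm.nonarchimedean (max_le ?_ ?_)
      · rw [padicNorm.mul, padicNorm.mul, pnorm_inv, hmnorm, hqmnorm]
        simpa using H
      · rw [padicNorm.mul, padicNorm.mul, pnorm_pow]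
        have h1 : padicNorm p (-1 : ℚ) = 1 := by
          rw [padicNorm.neg, padicNorm.one]
        rw [h1, one_pow, one_mul, padicNorm.mul, pnorm_pow, padicNorm.padicNorm_p_of_prime]
        have hY : padicNorm p ((q - m)⁻¹ * m⁻¹ + harm k * (q - m)⁻¹) ≤ 1 := by
          refine le_trans padicNorm.nonarchimedean (max_le ?_ ?_)
          · rw [padicNorm.mul, pnorm_inv, pnorm_inv, hmnorm, hqmnorm]; norm_num
          · rw [padicNorm.mul, pnorm_inv, hqmnorm]
            simpa using norm_harm_le (by omega : k < p)
        calc ((p:ℚ)⁻¹) ^ e * ((p:ℚ)⁻¹) ^ e * padicNorm p _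
            ≤ ((p:ℚ)⁻¹) ^ e * ((p:ℚ)⁻¹) ^ e * 1 := by
              refine mul_le_mul_of_nonneg_left hY (by positivity)
          _ = ((p:ℚ)⁻¹) ^ (2 * e) := by rw [mul_one, ← pow_add, two_mul]

lemma harm_succ (k : ℕ) : harm (k + 1) = harm k + ((k:ℚ) + 1)⁻¹ := by
  rw [harm, harm, Finset.sum_Icc_succ_top (by omega : 1 ≤ k + 1)]
  push_cast; ring

lemma altsum (c : ℚ) (m : ℕ) :
    ∑ k ∈ Icc 1 (2 * m), (-1:ℚ) ^ k * (1 + c * harm k)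
      = c * ∑ i ∈ Icc 1 m, ((2 * i : ℕ) : ℚ)⁻¹ := by
  induction m with
  | zero => simp
  | succ m IH =>
      have h2 : 2 * (m + 1) = (2 * m + 1) + 1 := by ring
      rw [h2, Finset.sum_Icc_succ_top (by omega), Finset.sum_Icc_succ_top (by omega),
        Finset.sum_Icc_succ_top (by omega : 1 ≤ m + 1), IH]
      have ho : (-1:ℚ) ^ (2 * m + 1) = -1 := Odd.neg_one_pow ⟨m, by ring⟩
      have he : (-1:ℚ) ^ (2 * m + 1 + 1) = 1 := Even.neg_one_pow ⟨m + 1, by ring⟩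
      have hh1 : harm (2 * m + 1) = harm (2 * m) + ((2 * m : ℚ) + 1)⁻¹ := by
        rw [harm_succ]; push_cast; ring
      have hh2 : harm (2 * m + 1 + 1) = harm (2 * m) + ((2 * m : ℚ) + 1)⁻¹ + ((2 * m : ℚ) + 2)⁻¹ := by
        rw [harm_succ, hh1]; push_cast; ring
      rw [ho, he, hh1, hh2]
      have hc : ((2 * (m + 1) : ℕ) : ℚ)⁻¹ = ((2 * m : ℚ) + 2)⁻¹ := by push_cast; ring_nf
      rw [hc]
      ring

lemma altharm (m : ℕ) :
    ∑ k ∈ Icc 1 (2 * m), (-1:ℚ) ^ k * (k : ℚ)⁻¹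
      = 2 * (∑ i ∈ Icc 1 m, ((2 * i : ℕ) : ℚ)⁻¹) - harm (2 * m) := by
  induction m with
  | zero => simp [harm]
  | succ m IH =>
      have h2 : 2 * (m + 1) = (2 * m + 1) + 1 := by ring
      rw [h2, Finset.sum_Icc_succ_top (by omega), Finset.sum_Icc_succ_top (by omega),
        Finset.sum_Icc_succ_top (by omega : 1 ≤ m + 1), IH]
      have ho : (-1:ℚ) ^ (2 * m + 1) = -1 := Odd.neg_one_pow ⟨m, by ring⟩
      have he : (-1:ℚ) ^ (2 * m + 1 + 1) = 1 := Even.neg_one_pow ⟨m + 1, by ring⟩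
      have hh1 : harm (2 * m + 1) = harm (2 * m) + ((2 * m : ℚ) + 1)⁻¹ := by
        rw [harm_succ]; push_cast; ring
      have hh2 : harm (2 * m + 1 + 1) = harm (2 * m) + ((2 * m : ℚ) + 1)⁻¹ + ((2 * m : ℚ) + 2)⁻¹ := by
        rw [harm_succ, hh1]; push_cast; ring
      have hc : ((2 * (m + 1) : ℕ) : ℚ)⁻¹ = ((2 * m : ℚ) + 2)⁻¹ := by push_cast; ring_nf
      have hc1 : ((2 * m + 1 : ℕ) : ℚ)⁻¹ = ((2 * m : ℚ) + 1)⁻¹ := by push_cast; ring_nf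
      have hc2 : ((2 * m + 1 + 1 : ℕ) : ℚ)⁻¹ = ((2 * m : ℚ) + 2)⁻¹ := by push_cast; ring_nf
      rw [ho, he, hh2, hc, hc1, hc2]
      ring

lemma choose_cong {p : ℕ} (hp : p.Prime) (j : ℕ) (hj : j ≤ p - 1) :
    (p : ℤ) ∣ ((p - 1).choose j : ℤ) - (-1) ^ j := by
  induction j with
  | zero => simp
  | succ j IH =>
      have hp1 : 1 < p := hp.one_lt
      have IH' := IH (by omega)
      have hps : p - 1 + 1 = p := by omega
      have hpascal : (p - 1).choose j + (p - 1).choose (j + 1) = p.choose (j + 1) := by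
        have h := Nat.choose_succ_succ (p - 1) j
        simp only [Nat.succ_eq_add_one, hps] at h
        exact h.symm
      have hdvd : (p : ℤ) ∣ (p.choose (j + 1) : ℤ) :=
        Int.natCast_dvd_natCast.mpr (Nat.Prime.dvd_choose_self hp (by omega) (by omega))
      have key : ((p - 1).choose (j + 1) : ℤ) - (-1) ^ (j + 1)
          = (p.choose (j + 1) : ℤ) - (((p - 1).choose j : ℤ) - (-1) ^ j) := by
        have : ((p.choose (j+1) : ℕ) : ℤ) = ((p-1).choose j : ℤ) + ((p-1).choose (j+1) : ℤ) := by
          exact_mod_cast congrArg (Nat.cast (R := ℤ)) hpascal.symm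
        rw [this, pow_succ]; ring
      rw [key]
      exact dvd_sub hdvd IH'

lemma norm_harm_top (hodd : Odd p) : padicNorm p (harm (p - 1)) ≤ (p:ℚ)⁻¹ := by
  have hp1 : 1 < p := hp.out.one_lt
  have hp3 : 3 ≤ p := by obtain ⟨t, ht⟩ := hodd; omega
  have hrefl : harm (p - 1) = ∑ k ∈ Icc 1 (p - 1), ((p:ℚ) - k)⁻¹ := by
    rw [harm]
    refine Finset.sum_nbij' (i := fun k => p - k) (j := fun k => p - k)
      (fun a ha => ?_) (fun a ha => ?_) (fun a ha => ?_) (fun a ha => ?_) (fun a ha => ?_)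
    · simp only [mem_Icc] at *; omega
    · simp only [mem_Icc] at *; omega
    · simp only [mem_Icc] at ha; show p - (p - a) = a; omega
    · simp only [mem_Icc] at ha; show p - (p - a) = a; omega
    · simp only [mem_Icc] at ha
      show ((a:ℚ))⁻¹ = ((p:ℚ) - (p - a : ℕ))⁻¹
      congr 1
      rw [Nat.cast_sub (by omega : a ≤ p)]
      ring
  have h2 : (2:ℚ) * harm (p - 1) = ∑ k ∈ Icc 1 (p - 1), ((k:ℚ)⁻¹ + ((p:ℚ) - k)⁻¹) := by
    rw [Finset.sum_add_distrib, ← hrefl, harm, two_mul]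
  have hb : padicNorm p ((2:ℚ) * harm (p - 1)) ≤ (p:ℚ)⁻¹ := by
    rw [h2]
    refine padicNorm.sum_le' (fun k hk => ?_) (by positivity)
    simp only [mem_Icc] at hk
    have hk0 : ((k:ℚ)) ≠ 0 := by
      have : 0 < k := hk.1
      positivity
    have hpk : padicNorm p ((p:ℚ) - k) = 1 := by
      have := norm_sub_unit (p := p) (e := 1) le_rfl hk.1 (by omega)
      rwa [pow_one] at this
    have hpk0 : ((p:ℚ) - k) ≠ 0 := by
      intro h; rw [h, padicNorm.zero] at hpk; norm_num at hpk
    have heq : (k:ℚ)⁻¹ + ((p:ℚ) - k)⁻¹ = (p:ℚ) * ((k:ℚ)⁻¹ * ((p:ℚ) - k)⁻¹) := by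
      field_simp
      ring
    rw [heq, padicNorm.mul, padicNorm.mul, pnorm_inv, pnorm_inv,
      padicNorm.padicNorm_p_of_prime, norm_unit hk.1 (by omega), hpk]
    norm_num
  have h2n : padicNorm p (2:ℚ) = 1 := by
    have : ¬ p ∣ 2 := by
      intro h
      have := Nat.le_of_dvd (by norm_num) h
      omega
    rw [show ((2:ℚ)) = ((2:ℕ):ℚ) by norm_num, padicNorm.nat_eq_one_iff]
    exact this
  rwa [padicNorm.mul, h2n, one_mul] at hb

lemma lemB (hodd : Odd p) :
    padicNorm p ((∑ i ∈ Icc 1 ((p - 1) / 2), ((2 * i : ℕ) : ℚ)⁻¹)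
      + ((2:ℚ) ^ (p - 1) - 1) / p) ≤ (p:ℚ)⁻¹ := by
  have hp1 : 1 < p := hp.out.one_lt
  have hp3 : 3 ≤ p := by obtain ⟨t, ht⟩ := hodd; omega
  have hp0 : (p:ℚ) ≠ 0 := by positivity
  set m : ℕ := (p - 1) / 2 with hmdef
  have hm : p - 1 = 2 * m := by obtain ⟨t, ht⟩ := hodd; omega
  set E : ℚ := ∑ i ∈ Icc 1 m, ((2 * i : ℕ) : ℚ)⁻¹ with hE
  -- step 1 : sum of middle binomials
  have hIco : Ico 1 p = Icc 1 (p - 1) := by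
    rw [← Finset.Ico_add_one_right_eq_Icc]
    congr 1
    omega
  have hsum : ∑ k ∈ Icc 1 (p - 1), (p.choose k : ℚ) = 2 ^ p - 2 := by
    have h0 := Nat.sum_range_choose p
    have hQ : ∑ k ∈ range (p + 1), (p.choose k : ℚ) = 2 ^ p := by
      exact_mod_cast congrArg (Nat.cast (R := ℚ)) h0
    rw [Finset.sum_range_succ] at hQ
    rw [Finset.range_eq_Ico, Finset.sum_eq_sum_Ico_succ_bot (by omega : 0 < p)] at hQ
    rw [hIco] at hQ
    simp only [Nat.choose_zero_right, Nat.choose_self, Nat.cast_one] at hQ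
    linarith
  -- step 2
  have hpow2 : (2:ℚ) ^ p = 2 ^ (p - 1) * 2 := by
    rw [← pow_succ]; congr 1; omega
  have hq2 : ((2:ℚ) ^ (p - 1) - 1) / p
      = ∑ k ∈ Icc 1 (p - 1), (p.choose k : ℚ) * ((2:ℚ) * p)⁻¹ := by
    rw [← Finset.sum_mul, hsum, hpow2]
    field_simp
  -- step 3 : pointwise
  have hpt : ∀ k ∈ Icc 1 (p - 1),
      (p.choose k : ℚ) * ((2:ℚ) * p)⁻¹
        = -((-1:ℚ) ^ k * (k : ℚ)⁻¹) * 2⁻¹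
          + (((p - 1).choose (k - 1) : ℚ) + (-1) ^ k) * ((2:ℚ) * k)⁻¹ := by
    intro k hk
    simp only [mem_Icc] at hk
    obtain ⟨j, rfl⟩ : ∃ j, k = j + 1 := ⟨k - 1, by omega⟩
    have hkey : (p : ℚ) * ((p - 1).choose j : ℚ) = (p.choose (j + 1) : ℚ) * ((j : ℚ) + 1) := by
      have h := Nat.add_one_mul_choose_eq (p - 1) j
      have h2 : p * (p - 1).choose j = p.choose (j + 1) * (j + 1) := by
        simpa [Nat.succ_eq_add_one, show p - 1 + 1 = p by omega] using h
      exact_mod_cast congrArg (Nat.cast (R := ℚ)) h2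
    have hk0 : ((j : ℚ) + 1) ≠ 0 := by positivity
    have hsimp : ((j + 1 : ℕ) : ℚ) = (j : ℚ) + 1 := by push_cast; ring
    have hchoose : (p.choose (j + 1) : ℚ) = (p:ℚ) * ((p - 1).choose j : ℚ) / ((j:ℚ) + 1) := by
      field_simp
      linear_combination (-1 : ℚ) * hkey
    simp only [Nat.add_sub_cancel, hsimp]
    rw [hchoose]
    field_simp
    ring
  -- step 4
  have hT : E + ((2:ℚ) ^ (p - 1) - 1) / p
      = harm (p - 1) / 2
        + ∑ k ∈ Icc 1 (p - 1),
            (((p - 1).choose (k - 1) : ℚ) + (-1) ^ k) * ((2:ℚ) * k)⁻¹ := by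
    rw [hq2, Finset.sum_congr rfl hpt, Finset.sum_add_distrib]
    have halt : ∑ k ∈ Icc 1 (p - 1), -((-1:ℚ) ^ k * (k : ℚ)⁻¹) = -(2 * E - harm (p - 1)) := by
      rw [Finset.sum_neg_distrib, hm, altharm m]
    have hmul : ∑ k ∈ Icc 1 (p - 1), -((-1:ℚ) ^ k * (k : ℚ)⁻¹) * 2⁻¹
        = (∑ k ∈ Icc 1 (p - 1), -((-1:ℚ) ^ k * (k : ℚ)⁻¹)) * 2⁻¹ := by
      rw [← Finset.sum_mul]
    rw [hmul, halt]
    ring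
  rw [hT]
  refine le_trans padicNorm.nonarchimedean (max_le ?_ ?_)
  · rw [padicNorm.div]
    have h2n : padicNorm p (2:ℚ) = 1 := by
      rw [show ((2:ℚ)) = ((2:ℕ):ℚ) by norm_num, padicNorm.nat_eq_one_iff]
      intro h
      have := Nat.le_of_dvd (by norm_num) h
      omega
    rw [h2n, div_one]
    exact norm_harm_top hodd
  · refine padicNorm.sum_le' (fun k hk => ?_) (by positivity)
    simp only [mem_Icc] at hk
    have hdvd : (p : ℤ) ∣ ((p - 1).choose (k - 1) : ℤ) + (-1) ^ k := by
      have h := choose_cong hp.out (k - 1) (by omega)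
      have hsign : (-1:ℤ) ^ (k - 1) = -(-1) ^ k := by
        obtain ⟨j, rfl⟩ : ∃ j, k = j + 1 := ⟨k - 1, by omega⟩
        simp [pow_succ]
      rw [hsign] at h
      simpa [sub_neg_eq_add] using h
    have hnum : padicNorm p (((p - 1).choose (k - 1) : ℚ) + (-1) ^ k) ≤ (p:ℚ)⁻¹ := by
      have hz : (((p - 1).choose (k - 1) : ℚ) + (-1) ^ k)
          = (((((p - 1).choose (k - 1) : ℤ) + (-1) ^ k) : ℤ) : ℚ) := by push_cast; ring
      rw [hz]
      have := (padicNorm.dvd_iff_norm_le (p := p) (n := 1)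
        (z := ((p - 1).choose (k - 1) : ℤ) + (-1) ^ k)).mp (by simpa using hdvd)
      simpa using this
    have hden : padicNorm p (((2:ℚ) * k)⁻¹) = 1 := by
      rw [pnorm_inv, show ((2:ℚ) * k) = ((2 * k : ℕ) : ℚ) by push_cast; ring,
        inv_eq_one, padicNorm.nat_eq_one_iff]
      intro h
      rcases (Nat.Prime.dvd_mul hp.out).mp h with h2 | hk'
      · have := Nat.le_of_dvd (by norm_num) h2; omega
      · exact Nat.not_dvd_of_pos_of_lt (by omega) (by omega) hk'
    rw [padicNorm.mul, hden, mul_one]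
    exact hnum


end S12

theorem stmt_12 (p : ℕ) (hp : p.Prime) (hodd : Odd p) (e : ℕ) (he : 1 ≤ e) :
    (∑ k ∈ Finset.Icc 1 (p - 1), (((p ^ e - 1).choose k : ℚ))⁻¹) -
        (p : ℚ) ^ (e - 1) * (1 - 2 ^ (p - 1)) = 0 ∨
    (e : ℤ) + 1 ≤ padicValRat p
      ((∑ k ∈ Finset.Icc 1 (p - 1), (((p ^ e - 1).choose k : ℚ))⁻¹) -
        (p : ℚ) ^ (e - 1) * (1 - 2 ^ (p - 1))) := by
  haveI : Fact p.Prime := ⟨hp⟩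
  have hp1 : 1 < p := hp.one_lt
  have hp0 : (p:ℚ) ≠ 0 := by positivity
  have hpge1 : (1:ℚ) ≤ (p:ℚ) := by exact_mod_cast hp1.le
  set m : ℕ := (p - 1) / 2 with hmdef
  have hm : p - 1 = 2 * m := by obtain ⟨t, ht⟩ := hodd; omega
  set E : ℚ := ∑ i ∈ Finset.Icc 1 m, ((2 * i : ℕ) : ℚ)⁻¹ with hE
  set D : ℚ := (∑ k ∈ Finset.Icc 1 (p - 1), (((p ^ e - 1).choose k : ℚ))⁻¹) -
        (p : ℚ) ^ (e - 1) * (1 - 2 ^ (p - 1)) with hD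
  have hB : ∑ k ∈ Finset.Icc 1 (p - 1), (-1:ℚ) ^ k * (1 + (p:ℚ) ^ e * S12.harm k)
      = (p:ℚ) ^ e * E := by
    rw [hm]; exact S12.altsum _ m
  have hpe : (p:ℚ) ^ (e - 1) * (p:ℚ) = (p:ℚ) ^ e := by
    rw [← pow_succ]; congr 1; omega
  have hsplit : D = (∑ k ∈ Finset.Icc 1 (p - 1),
      ((((p ^ e - 1).choose k : ℚ))⁻¹ - (-1:ℚ) ^ k * (1 + (p:ℚ) ^ e * S12.harm k)))
      + (p:ℚ) ^ (e - 1) * ((p:ℚ) * (E + ((2:ℚ) ^ (p - 1) - 1) / p)) := by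
    rw [hD, Finset.sum_sub_distrib, hB, ← hpe]
    field_simp
    ring
  have hnorm : padicNorm p D ≤ ((p:ℚ)⁻¹) ^ (e + 1) := by
    rw [hsplit]
    refine le_trans padicNorm.nonarchimedean (max_le ?_ ?_)
    · have h1 : padicNorm p (∑ k ∈ Finset.Icc 1 (p - 1),
          ((((p ^ e - 1).choose k : ℚ))⁻¹ - (-1:ℚ) ^ k * (1 + (p:ℚ) ^ e * S12.harm k)))
          ≤ ((p:ℚ)⁻¹) ^ (2 * e) :=
        padicNorm.sum_le' (fun k hk => S12.lemA he k (Finset.mem_Icc.mp hk).2) (by positivity)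
      exact le_trans h1
        (pow_le_pow_of_le_one (by positivity) (inv_le_one_of_one_le₀ hpge1) (by omega))
    · rw [padicNorm.mul, padicNorm.mul, S12.norm_p_pow, padicNorm.padicNorm_p_of_prime]
      have hTb := S12.lemB (p := p) hodd
      calc ((p:ℚ)⁻¹) ^ (e - 1) * ((p:ℚ)⁻¹ * padicNorm p (E + ((2:ℚ) ^ (p - 1) - 1) / p))
          ≤ ((p:ℚ)⁻¹) ^ (e - 1) * ((p:ℚ)⁻¹ * (p:ℚ)⁻¹) := by
            refine mul_le_mul_of_nonneg_left (mul_le_mul_of_nonneg_left hTb (by positivity))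
              (by positivity)
        _ = ((p:ℚ)⁻¹) ^ ((e - 1) + 2) := by rw [pow_add]; ring
        _ = ((p:ℚ)⁻¹) ^ (e + 1) := by congr 1; omega
  by_cases hD0 : D = 0
  · exact Or.inl hD0
  · right
    rw [padicNorm.eq_zpow_of_nonzero hD0] at hnorm
    have hcast : ((p:ℚ)⁻¹) ^ (e + 1) = (p:ℚ) ^ (-((e:ℤ) + 1)) := by
      rw [inv_pow, ← zpow_natCast, ← zpow_neg]
      norm_num
    rw [hcast] at hnorm
    have hgt : (1:ℚ) < (p:ℚ) := by exact_mod_cast hp1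
    have hle := (zpow_le_zpow_iff_right₀ hgt).mp hnorm
    linarith
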